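/- Let V_P, V_Q, g > 0. Set S = √(V_P(4V_Q + V_P g²)) and ρ = (2V_Q + g(V_P g + S))/(2V_Q + g(V_P g − S)), noting that 2V_Q + g(V_P g − S) > 0 so that ρ > 1. Define the sequence (V_k)_{k≥1} by V₁ = V_P + V_Q/g² and V_{k+1} = V_P + V_Q V_k/(V_Q + g² V_k). Then for every k ≥ 1, V_k = V_P/2 + (S/(2g)) · (1 + 2/(ρ^k − 1)). -/

import Mathlib

lemma variance_step (VP VQ g S r : ℝ) (hg : 0 < g)
    (hS : 0 < S) (hS2 : S ^ 2 = VP * (4 * VQ + VP * g ^ 2))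
    (hb : 0 < 2 * VQ + g * (VP * g - S)) (hr : 1 < r) :
    VP + VQ * (VP / 2 + S / (2 * g) * (1 + 2 / (r - 1))) /
        (VQ + g ^ 2 * (VP / 2 + S / (2 * g) * (1 + 2 / (r - 1))))
      = VP / 2 + S / (2 * g) *
          (1 + 2 / ((2 * VQ + g * (VP * g + S)) / (2 * VQ + g * (VP * g - S)) * r - 1)) := by
  have ha : 0 < 2 * VQ + g * (VP * g + S) := by nlinarith [mul_pos hg hS]
  have hr1 : (0:ℝ) < r - 1 := sub_pos.mpr hr
  have hab : 2 * VQ + g * (VP * g - S) < 2 * VQ + g * (VP * g + S) := by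
    nlinarith [mul_pos hg hS]
  have hND : 0 < (2 * VQ + g * (VP * g + S)) * r - (2 * VQ + g * (VP * g - S)) := by
    nlinarith
  have hW : VP / 2 + S / (2 * g) * (1 + 2 / (r - 1))
      = ((g * VP + S) * r - (g * VP - S)) / (2 * g * (r - 1)) := by
    field_simp; ring
  have hρr : (2 * VQ + g * (VP * g + S)) / (2 * VQ + g * (VP * g - S)) * r - 1
      = ((2 * VQ + g * (VP * g + S)) * r - (2 * VQ + g * (VP * g - S)))
        / (2 * VQ + g * (VP * g - S)) := by
    rw [div_mul_eq_mul_div, div_sub_one hb.ne']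
  have hD : VQ + g ^ 2 * (VP / 2 + S / (2 * g) * (1 + 2 / (r - 1)))
      = ((2 * VQ + g * (VP * g + S)) * r - (2 * VQ + g * (VP * g - S))) / (2 * (r - 1)) := by
    rw [hW]; field_simp; ring
  rw [hD, hρr, hW]
  have h1 : (r-1) ≠ 0 := ne_of_gt hr1
  have h2 : ((2 * VQ + g * (VP * g + S)) * r - (2 * VQ + g * (VP * g - S))) ≠ 0 := ne_of_gt hND
  have h3 : (2 * VQ + g * (VP * g - S)) ≠ 0 := ne_of_gt hb
  have h4 : g ≠ 0 := ne_of_gt hg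
  generalize hN : (2 * VQ + g * (VP * g + S)) * r - (2 * VQ + g * (VP * g - S)) = N at h2 ⊢
  generalize hc : 2 * VQ + g * (VP * g - S) = c at h3 ⊢
  field_simp
  subst hN hc
  linear_combination (g * (1 - r)) * hS2

/-- **Closed-form solution (Eq. E.15)** of the variance recurrence
`V_{k+1} = V_P + V_Q V_k/(V_Q + g² V_k)` with `V₁ = V_P + V_Q/g²`, in terms of
`S = √(V_P(4V_Q + V_P g²))` and `ρ = (2V_Q + g(V_P g + S))/(2V_Q + g(V_P g − S))`. -/
theorem variance_recurrence_closed_form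
    (VP VQ g : ℝ) (hVP : 0 < VP) (hVQ : 0 < VQ) (hg : 0 < g)
    (V : ℕ → ℝ)
    (hV1 : V 1 = VP + VQ / g ^ 2)
    (hVrec : ∀ k ≥ 1, V (k + 1) = VP + VQ * V k / (VQ + g ^ 2 * V k)) :
    0 < 2 * VQ + g * (VP * g - Real.sqrt (VP * (4 * VQ + VP * g ^ 2))) ∧
    1 < (2 * VQ + g * (VP * g + Real.sqrt (VP * (4 * VQ + VP * g ^ 2)))) /
        (2 * VQ + g * (VP * g - Real.sqrt (VP * (4 * VQ + VP * g ^ 2)))) ∧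
    ∀ k ≥ 1,
      V k = VP / 2 +
        (Real.sqrt (VP * (4 * VQ + VP * g ^ 2)) / (2 * g)) *
          (1 + 2 /
            (((2 * VQ + g * (VP * g + Real.sqrt (VP * (4 * VQ + VP * g ^ 2)))) /
                (2 * VQ + g * (VP * g - Real.sqrt (VP * (4 * VQ + VP * g ^ 2))))) ^ k
              - 1)) := by
  set S := Real.sqrt (VP * (4 * VQ + VP * g ^ 2)) with hSdef
  have harg : 0 < VP * (4 * VQ + VP * g ^ 2) := by positivity
  have hSpos : 0 < S := Real.sqrt_pos.mpr harg
  have hS2 : S ^ 2 = VP * (4 * VQ + VP * g ^ 2) := Real.sq_sqrt harg.le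
  have hb : 0 < 2 * VQ + g * (VP * g - S) := by
    have h1 : 0 < g * S + (2 * VQ + VP * g ^ 2) := by positivity
    nlinarith [hS2, h1, sq_nonneg VQ]
  have ha : 0 < 2 * VQ + g * (VP * g + S) := by nlinarith [mul_pos hg hSpos]
  set ρ := (2 * VQ + g * (VP * g + S)) / (2 * VQ + g * (VP * g - S)) with hρdef
  have hρ : 1 < ρ := by
    rw [hρdef, lt_div_iff₀ hb]
    nlinarith [mul_pos hg hSpos]
  refine ⟨hb, hρ, ?_⟩
  intro k hk
  induction k with
  | zero => omega
  | succ n ih =>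
    rcases Nat.eq_or_lt_of_le hk with h1 | h1
    · -- n + 1 = 1
      have hn : n = 0 := by omega
      subst hn
      rw [hV1, pow_one]
      have h3 : (2 * VQ + g * (VP * g - S)) ≠ 0 := ne_of_gt hb
      have hρ1 : ρ - 1 = 2 * g * S / (2 * VQ + g * (VP * g - S)) := by
        rw [hρdef, div_sub_one h3]; congr 1; ring
      rw [hρ1]
      have h4 : g ≠ 0 := ne_of_gt hg
      have h5 : S ≠ 0 := ne_of_gt hSpos
      field_simp
      ring
    · have hn1 : n ≥ 1 := by omega
      have ihn := ih hn1
      have hrn : (1:ℝ) < ρ ^ n := one_lt_pow₀ hρ (by omega)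
      rw [hVrec n hn1, ihn]
      have hpow : ρ ^ (n + 1) = ρ * ρ ^ n := by ring
      rw [hpow, hρdef]
      exact variance_step VP VQ g S (ρ ^ n) hg hSpos hS2 hb hrn
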